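/- arXiv:1910.01397 — 2 statements merged into one kernel-verified Lean document; each statement's English description precedes it below -/
import Mathlib

section
/- Let n ≥ 1 and let G₁, …, Gₙ be linearly ordered abelian groups. Define linear orders Lₙ = Gₙ and, recursively for 1 ≤ i < n, Lᵢ = Gᵢ ×ₗ WithTop L_{i+1}. If L₁ is order-isomorphic to ℝ, then Gᵢ is isomorphic, as an ordered group, to ℤ for every 1 ≤ i ≤ n−1, and Gₙ is isomorphic, as an ordered group, to ℝ. -/
set_option maxHeartbeats 1000000

section Helpers

lemma exists_isLUB_of_orderIsoReal {α : Type*} [LinearOrder α] (e : α ≃o ℝ) {S : Set α}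
    (h1 : S.Nonempty) (h2 : BddAbove S) : ∃ s, IsLUB S s := by
  refine ⟨e.symm (sSup (e '' S)), (e.isLUB_image).mp ?_⟩
  refine Real.isLUB_sSup (h1.image e) ?_
  obtain ⟨b, hb⟩ := h2
  refine ⟨e b, ?_⟩
  rintro y ⟨x, hx, rfl⟩
  exact e.le_iff_le.mpr (hb hx)

lemma my_nsmul_le_nsmul {M : Type*} [AddCommMonoid M] [PartialOrder M] [IsOrderedAddMonoid M] {a b : M} (h : a ≤ b) (n : ℕ) :
    n • a ≤ n • b := by
  induction n with
  | zero => simp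
  | succ n ih => rw [succ_nsmul, succ_nsmul]; exact add_le_add ih h

lemma archimedean_of_lub {G : Type*} [AddCommGroup G] [LinearOrder G] [IsOrderedAddMonoid G]
    (hl : ∀ S : Set G, S.Nonempty → BddAbove S → ∃ s, IsLUB S s) : Archimedean G := by
  constructor
  intro x y hy
  by_contra hc
  push_neg at hc
  obtain ⟨s, hs⟩ := hl (Set.range fun n : ℕ => n • y) ⟨0, 0, by simp⟩
    ⟨x, by rintro _ ⟨n, rfl⟩; exact (hc n).le⟩
  have h1 : s - y ∈ upperBounds (Set.range fun n : ℕ => n • y) := by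
    rintro _ ⟨n, rfl⟩
    have h2 : (n + 1) • y ≤ s := hs.1 ⟨n + 1, rfl⟩
    rw [succ_nsmul] at h2
    exact le_sub_iff_add_le.mpr h2
  exact absurd (hs.2 h1) (not_le.mpr (sub_lt_self s hy))

lemma exists_nsmul_le {G : Type*} [AddCommGroup G] [LinearOrder G] [IsOrderedAddMonoid G] [DenselyOrdered G]
    (n : ℕ) {δ : G} (hδ : 0 < δ) : ∃ ε : G, 0 < ε ∧ n • ε ≤ δ := by
  induction n generalizing δ with
  | zero => exact ⟨δ, hδ, by simpa using hδ.le⟩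
  | succ n ih =>
    obtain ⟨c, hc0, hcδ⟩ := exists_between hδ
    have half : ∃ ε1 : G, 0 < ε1 ∧ ε1 + ε1 ≤ δ := by
      rcases le_or_gt (c + c) δ with h | h
      · exact ⟨c, hc0, h⟩
      · refine ⟨δ - c, sub_pos.mpr hcδ, ?_⟩
        rw [sub_add_sub_comm]
        refine sub_le_iff_le_add.mpr ?_
        exact add_le_add_right h.le δ
    obtain ⟨ε1, he1, he11⟩ := half
    obtain ⟨ε2, he2, he2n⟩ := ih he1
    refine ⟨min ε1 ε2, lt_min he1 he2, ?_⟩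
    calc (n + 1) • min ε1 ε2 = n • min ε1 ε2 + min ε1 ε2 := succ_nsmul _ n
      _ ≤ n • ε2 + ε1 := add_le_add (my_nsmul_le_nsmul (min_le_right _ _) n) (min_le_left _ _)
      _ ≤ ε1 + ε1 := add_le_add_left he2n _
      _ ≤ δ := he11

end Helpers

section LemmaA

lemma cross_le {G : Type*} [AddCommGroup G] [LinearOrder G] [IsOrderedAddMonoid G] {u z : G} {m c k n : ℤ}
    (hu : 0 < u) (hk : 0 ≤ k) (hn : 0 ≤ n) (h1 : m • u ≤ n • z) (h2 : k • z ≤ c • u) :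
    k * m ≤ n * c := by
  have key : (k * m) • u ≤ (n * c) • u := by
    calc (k * m) • u = k • (m • u) := mul_smul _ _ _
      _ ≤ k • (n • z) := zsmul_le_zsmul_right hk h1
      _ = n • (k • z) := by rw [← mul_smul, mul_comm k n, mul_smul]
      _ ≤ n • (c • u) := zsmul_le_zsmul_right hn h2
      _ = (n * c) • u := (mul_smul _ _ _).symm
  exact (zsmul_le_zsmul_iff_left hu).mp key

lemma cross_lt {G : Type*} [AddCommGroup G] [LinearOrder G] [IsOrderedAddMonoid G] {u z : G} {m c k n : ℤ}
    (hu : 0 < u) (hk : 0 ≤ k) (hn : 0 < n) (h1 : m • u ≤ n • z) (h2 : k • z < c • u) :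
    k * m < n * c := by
  have key : (k * m) • u < (n * c) • u := by
    calc (k * m) • u = k • (m • u) := mul_smul _ _ _
      _ ≤ k • (n • z) := zsmul_le_zsmul_right hk h1
      _ = n • (k • z) := by rw [← mul_smul, mul_comm k n, mul_smul]
      _ < n • (c • u) := zsmul_lt_zsmul_right hn h2
      _ = (n * c) • u := (mul_smul _ _ _).symm
  exact (zsmul_lt_zsmul_iff_left hu).mp key

lemma ordered_group_iso_real_of_orderIso {G : Type*} [AddCommGroup G] [LinearOrder G] [IsOrderedAddMonoid G]
    (e : G ≃o ℝ) : ∃ f : G ≃+ ℝ, ∀ x y : G, x ≤ y ↔ f x ≤ f y := by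
  have hlub : ∀ S : Set G, S.Nonempty → BddAbove S → ∃ s, IsLUB S s :=
    fun S h1 h2 => exists_isLUB_of_orderIsoReal e h1 h2
  haveI : Archimedean G := archimedean_of_lub hlub
  haveI : DenselyOrdered G := (denselyOrdered_iff_of_orderIsoClass e).mpr inferInstance
  obtain ⟨u, hu⟩ : ∃ u : G, 0 < u := by
    refine ⟨e.symm (e 0 + 1), ?_⟩
    have h1 : e (0 : G) < e (0 : G) + 1 := lt_add_one _
    have h2 := e.symm.lt_iff_lt.mpr h1
    rwa [e.symm_apply_apply] at h2
  set D : G → Set ℝ := fun g =>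
    {x | ∃ (m : ℤ) (n : ℕ), 0 < n ∧ x = (m : ℝ) / (n : ℝ) ∧ m • u ≤ (n : ℤ) • g} with hD
  have hne : ∀ g, (D g).Nonempty := by
    intro g
    obtain ⟨k, hk⟩ := Archimedean.arch (-g) hu
    refine ⟨((-(k : ℤ) : ℤ) : ℝ) / ((1 : ℕ) : ℝ), -(k : ℤ), 1, one_pos, rfl, ?_⟩
    show -(k : ℤ) • u ≤ ((1 : ℕ) : ℤ) • g
    rw [Nat.cast_one, one_zsmul, neg_zsmul, natCast_zsmul]
    exact neg_le.mp hk
  have hbdd : ∀ g, BddAbove (D g) := by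
    intro g
    obtain ⟨K, hK⟩ := Archimedean.arch g hu
    refine ⟨(K : ℝ), ?_⟩
    rintro x ⟨m, n, hn, rfl, hle⟩
    have h2 : (1 : ℤ) • g ≤ (K : ℤ) • u := by
      rw [one_zsmul, natCast_zsmul]
      exact hK
    have h4 : 1 * m ≤ (n : ℤ) * (K : ℤ) := cross_le hu one_pos.le (by positivity) hle h2
    rw [one_mul] at h4
    rw [div_le_iff₀ (by exact_mod_cast hn)]
    have h5 : (m : ℝ) ≤ ((n : ℤ) * (K : ℤ) : ℤ) := by exact_mod_cast h4
    push_cast at h5 ⊢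
    linarith
  set f : G → ℝ := fun g => sSup (D g) with hf
  have hmem_le : ∀ {g : G} {m : ℤ} {n : ℕ}, 0 < n → m • u ≤ (n : ℤ) • g →
      (m : ℝ) / (n : ℝ) ≤ f g :=
    fun {g m n} hn h => le_csSup (hbdd g) ⟨m, n, hn, rfl, h⟩
  have hub : ∀ {g : G} {m : ℤ} {n : ℕ}, 0 < n → (n : ℤ) • g < m • u →
      f g ≤ (m : ℝ) / (n : ℝ) := by
    intro g m n hn hlt
    apply csSup_le (hne g)
    rintro x ⟨m', n', hn', rfl, hle'⟩
    have C : (n : ℤ) * m' < (n' : ℤ) * m :=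
      cross_lt hu (by positivity) (by exact_mod_cast hn') hle' hlt
    rw [div_le_div_iff₀ (by exact_mod_cast hn') (by exact_mod_cast hn)]
    have C2 : (((n : ℤ) * m' : ℤ) : ℝ) < (((n' : ℤ) * m : ℤ) : ℝ) := by exact_mod_cast C
    push_cast at C2
    linarith [C2]
  have hadd : ∀ g h : G, f (g + h) = f g + f h := by
    intro g h
    apply le_antisymm
    · apply csSup_le (hne _)
      rintro x ⟨m, n, hn, rfl, hle⟩
      by_contra hx
      push_neg at hx
      have hn' : (0 : ℝ) < (n : ℝ) := by exact_mod_cast hn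
      obtain ⟨q, hq1, hq2⟩ := exists_rat_btwn (show f g < (m : ℝ) / n - f h by linarith)
      obtain ⟨q', hq'1, hq'2⟩ := exists_rat_btwn (show f h < (m : ℝ) / n - (q : ℝ) by linarith)
      have hg : (q.den : ℤ) • g < q.num • u := by
        by_contra hcon
        push_neg at hcon
        have := hmem_le q.pos hcon
        rw [← Rat.cast_def] at this
        linarith
      have hh : (q'.den : ℤ) • h < q'.num • u := by
        by_contra hcon
        push_neg at hcon
        have := hmem_le q'.pos hcon
        rw [← Rat.cast_def] at this
        linarith
      have hqden : (0 : ℤ) < (q.den : ℤ) := by exact_mod_cast q.pos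
      have hq'den : (0 : ℤ) < (q'.den : ℤ) := by exact_mod_cast q'.pos
      have K1 : ((q.den : ℤ) * (q'.den : ℤ)) • (g + h)
          < (q.num * (q'.den : ℤ) + q'.num * (q.den : ℤ)) • u := by
        rw [smul_add, add_smul]
        refine add_lt_add ?_ ?_
        · rw [mul_comm ((q.den : ℤ)) ((q'.den : ℤ)), mul_smul,
            mul_comm (q.num) ((q'.den : ℤ)), mul_smul]
          exact zsmul_lt_zsmul_right hq'den hg
        · rw [mul_smul, mul_comm (q'.num) ((q.den : ℤ)), mul_smul]
          exact zsmul_lt_zsmul_right hqden hh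
      have K3 : (q.den : ℤ) * (q'.den : ℤ) * m
          < (n : ℤ) * (q.num * (q'.den : ℤ) + q'.num * (q.den : ℤ)) :=
        cross_lt hu (by positivity) (by exact_mod_cast hn) hle K1
      have K3' : ((q.den : ℤ) * (q'.den : ℤ) * m : ℝ)
          < ((n : ℤ) * (q.num * (q'.den : ℤ) + q'.num * (q.den : ℤ)) : ℝ) := by
        exact_mod_cast K3
      have hfrac : (m : ℝ) / n < (q : ℝ) + (q' : ℝ) := by
        rw [Rat.cast_def, Rat.cast_def, div_add_div _ _
          (by exact_mod_cast q.pos.ne' : ((q.den : ℝ)) ≠ 0)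
          (by exact_mod_cast q'.pos.ne' : ((q'.den : ℝ)) ≠ 0),
          div_lt_div_iff₀ hn' (by positivity)]
        push_cast at K3' ⊢
        linear_combination K3'
      linarith
    · have step : ∀ x ∈ D g, ∀ y ∈ D h, x + y ≤ f (g + h) := by
        rintro x ⟨m, n, hn, rfl, hle⟩ y ⟨m', n', hn', rfl, hle'⟩
        have key : (m * (n' : ℤ) + m' * (n : ℤ)) • u ≤ ((n * n' : ℕ) : ℤ) • (g + h) := by
          have T1 : (m * (n' : ℤ)) • u ≤ (((n : ℤ) * (n' : ℤ))) • g := by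
            rw [mul_comm m ((n' : ℤ)), mul_smul, mul_comm ((n : ℤ)) ((n' : ℤ)), mul_smul]
            exact zsmul_le_zsmul_right (by positivity) hle
          have T2 : (m' * (n : ℤ)) • u ≤ (((n : ℤ) * (n' : ℤ))) • h := by
            rw [mul_comm m' ((n : ℤ)), mul_smul, mul_smul]
            exact zsmul_le_zsmul_right (by positivity) hle'
          have : ((n * n' : ℕ) : ℤ) = (n : ℤ) * (n' : ℤ) := by push_cast; ring
          rw [this, smul_add, add_smul]
          exact add_le_add T1 T2
        have hmem := hmem_le (g := g + h) (Nat.mul_pos hn hn') key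
        have heq : (m : ℝ) / n + (m' : ℝ) / n' =
            ((m * (n' : ℤ) + m' * (n : ℤ) : ℤ) : ℝ) / ((n * n' : ℕ) : ℝ) := by
          rw [div_add_div _ _ (by exact_mod_cast hn.ne' : ((n : ℝ)) ≠ 0)
            (by exact_mod_cast hn'.ne' : ((n' : ℝ)) ≠ 0)]
          push_cast
          ring
        rw [heq]
        exact hmem
      have h1 : ∀ y ∈ D h, f g + y ≤ f (g + h) := by
        intro y hy
        have h2 : ∀ x ∈ D g, x ≤ f (g + h) - y := fun x hx => by linarith [step x hx y hy]
        linarith [csSup_le (hne g) h2]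
      have h3 : ∀ y ∈ D h, y ≤ f (g + h) - f g := fun y hy => by linarith [h1 y hy]
      linarith [csSup_le (hne h) h3]
  have hzero : f 0 = 0 := by
    apply le_antisymm
    · apply csSup_le (hne 0)
      rintro x ⟨m, n, hn, rfl, hle⟩
      rw [smul_zero, show (0 : G) = (0 : ℤ) • u by simp] at hle
      have hm : m ≤ 0 := (zsmul_le_zsmul_iff_left hu).mp hle
      apply div_nonpos_of_nonpos_of_nonneg
      · exact_mod_cast hm
      · positivity
    · have := hmem_le (g := 0) (m := 0) (n := 1) one_pos (by simp)
      simpa using this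
  have hmono : StrictMono f := by
    intro g h hgh
    obtain ⟨n0, hn0⟩ := Archimedean.arch u (sub_pos.mpr hgh)
    have hn0pos : 0 < n0 := by
      rcases Nat.eq_zero_or_pos n0 with h0 | h0
      · subst h0; simp at hn0; exact absurd (hu.trans_le hn0) (lt_irrefl 0)
      · exact h0
    set N : ℕ := 2 * n0 with hN
    have hNpos : 0 < N := by omega
    have hNposZ : (0 : ℤ) < (N : ℤ) := by exact_mod_cast hNpos
    have hNR : (0 : ℝ) < (N : ℝ) := by exact_mod_cast hNpos
    have hN2 : (2 : ℤ) • u ≤ (N : ℤ) • (h - g) := by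
      have hcast : ((N : ℕ) : ℤ) = 2 * (n0 : ℤ) := by rw [hN]; push_cast; ring
      rw [hcast, mul_smul]
      refine zsmul_le_zsmul_right (by norm_num) ?_
      rw [natCast_zsmul]
      exact hn0
    have hbddP : ∃ bz : ℤ, ∀ z : ℤ, z • u ≤ (N : ℤ) • h → z ≤ bz := by
      obtain ⟨K, hK⟩ := Archimedean.arch ((N : ℤ) • h) hu
      refine ⟨(K : ℤ), fun z hz => ?_⟩
      have h6 : z • u ≤ (K : ℤ) • u := by
        rw [natCast_zsmul]
        exact hz.trans hK
      exact (zsmul_le_zsmul_iff_left hu).mp h6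
    have hneP : ∃ z : ℤ, z • u ≤ (N : ℤ) • h := by
      obtain ⟨k, hk⟩ := Archimedean.arch (-((N : ℤ) • h)) hu
      refine ⟨-(k : ℤ), ?_⟩
      rw [neg_zsmul, natCast_zsmul]
      exact neg_le.mp hk
    obtain ⟨m₀, hm₀, hmax⟩ := Int.exists_greatest_of_bdd hbddP hneP
    have hup : (N : ℤ) • h < (m₀ + 1) • u := by
      by_contra hcon
      push_neg at hcon
      have := hmax _ hcon
      omega
    have hgl : (N : ℤ) • g < (m₀ - 1) • u := by
      have h1 : (N : ℤ) • g + (2 : ℤ) • u ≤ (N : ℤ) • h := by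
        have h2 : (N : ℤ) • (h - g) = (N : ℤ) • h - (N : ℤ) • g := smul_sub _ _ _
        rw [h2] at hN2
        exact add_le_of_le_sub_left hN2
      have h3 : (N : ℤ) • g + (2 : ℤ) • u < (m₀ + 1) • u := h1.trans_lt hup
      have h4 : (m₀ + 1) • u - (2 : ℤ) • u = (m₀ - 1) • u := by
        rw [← sub_smul]; congr 1; ring
      rw [← h4]
      exact lt_sub_iff_add_lt.mpr h3
    have hfg : f g ≤ ((m₀ - 1 : ℤ) : ℝ) / (N : ℝ) := hub hNpos hgl
    have hfh : ((m₀ : ℤ) : ℝ) / (N : ℝ) ≤ f h := hmem_le hNpos hm₀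
    have hm01 : ((m₀ - 1 : ℤ) : ℝ) < ((m₀ : ℤ) : ℝ) := by push_cast; linarith
    have hlt : ((m₀ - 1 : ℤ) : ℝ) / (N : ℝ) < ((m₀ : ℤ) : ℝ) / (N : ℝ) :=
      div_lt_div_of_pos_right hm01 hNR
    exact hfg.trans_lt (hlt.trans_le hfh)
  let F : G →+ ℝ := AddMonoidHom.mk' f hadd
  have hFf : ∀ g, F g = f g := fun g => rfl
  have hfu : 0 < f u := by
    have := hmono hu
    rwa [hzero] at this
  have hsurj : Function.Surjective F := by
    intro r
    have hTne : ∃ g : G, f g ≤ r := by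
      obtain ⟨k, hk⟩ := Archimedean.arch (-r) hfu
      refine ⟨(-(k : ℤ)) • u, ?_⟩
      show f ((-(k : ℤ)) • u) ≤ r
      have h1 : f ((-(k : ℤ)) • u) = -(k • f u) :=
        calc f ((-(k : ℤ)) • u) = (-(k : ℤ)) • f u := map_zsmul F _ _
          _ = -((k : ℤ) • f u) := neg_zsmul _ _
          _ = -(k • f u) := by rw [natCast_zsmul]
      rw [h1]
      exact neg_le.mp hk
    have hTbdd : BddAbove {g : G | f g ≤ r} := by
      obtain ⟨K, hK⟩ := Archimedean.arch r hfu
      refine ⟨K • u, fun g hg => ?_⟩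
      have h1 : f g ≤ f (K • u) := hg.trans (hK.trans_eq (map_nsmul F K u).symm)
      exact (hmono.le_iff_le).mp h1
    obtain ⟨g₀, hg₀⟩ := hlub _ hTne hTbdd
    refine ⟨g₀, ?_⟩
    rcases lt_trichotomy (f g₀) r with hlt | heq | hgt
    · exfalso
      obtain ⟨k, hk⟩ := Archimedean.arch (f u) (sub_pos.mpr hlt)
      have hkpos : 0 < k := by
        rcases Nat.eq_zero_or_pos k with h0 | h0
        · subst h0; simp at hk; linarith
        · exact h0
      obtain ⟨δ, hδ, hδk⟩ := exists_nsmul_le k hu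
      have h1 : k • f δ ≤ k • (r - f g₀) := by
        have h2 : f (k • δ) ≤ f u := hmono.le_iff_le.mpr hδk
        have h3 : k • f δ ≤ f u := le_of_eq_of_le (map_nsmul F k δ).symm h2
        exact h3.trans hk
      have hfδ : f δ ≤ r - f g₀ := by
        rw [nsmul_eq_mul, nsmul_eq_mul] at h1
        exact le_of_mul_le_mul_left h1 (by exact_mod_cast hkpos)
      have hmem : g₀ + δ ∈ {g : G | f g ≤ r} := by
        show f (g₀ + δ) ≤ r
        rw [hadd]
        linarith
      exact absurd (hg₀.1 hmem) (not_le.mpr (lt_add_of_pos_right g₀ hδ))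
    · exact heq
    · exfalso
      obtain ⟨k, hk⟩ := Archimedean.arch (f u) (sub_pos.mpr hgt)
      have hkpos : 0 < k := by
        rcases Nat.eq_zero_or_pos k with h0 | h0
        · subst h0; simp at hk; linarith
        · exact h0
      obtain ⟨δ, hδ, hδk⟩ := exists_nsmul_le k hu
      have h1 : k • f δ ≤ k • (f g₀ - r) := by
        have h2 : f (k • δ) ≤ f u := hmono.le_iff_le.mpr hδk
        have h3 : k • f δ ≤ f u := le_of_eq_of_le (map_nsmul F k δ).symm h2
        exact h3.trans hk
      have hfδ : f δ ≤ f g₀ - r := by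
        rw [nsmul_eq_mul, nsmul_eq_mul] at h1
        exact le_of_mul_le_mul_left h1 (by exact_mod_cast hkpos)
      have hub' : g₀ - δ ∈ upperBounds {g : G | f g ≤ r} := by
        intro g hg
        have h2 : f (g₀ - δ) = f g₀ - f δ := map_sub F g₀ δ
        have h3 : f g ≤ f (g₀ - δ) := by
          rw [h2]
          have : f g ≤ r := hg
          linarith
        exact (hmono.le_iff_le).mp h3
      exact absurd (hg₀.2 hub') (not_le.mpr (sub_lt_self g₀ hδ))
  exact ⟨AddEquiv.ofBijective F ⟨hmono.injective, hsurj⟩, fun x y => (hmono.le_iff_le).symm⟩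

end LemmaA

section LexHelpers

lemma lex_le_iff' {A B : Type*} [LT A] [LE B] {a₁ a₂ : A} {b₁ b₂ : B} :
    toLex (a₁, b₁) ≤ toLex (a₂, b₂) ↔ a₁ < a₂ ∨ (a₁ = a₂ ∧ b₁ ≤ b₂) :=
  Prod.Lex.le_iff

lemma lex_lt_iff' {A B : Type*} [LT A] [LT B] {a₁ a₂ : A} {b₁ b₂ : B} :
    toLex (a₁, b₁) < toLex (a₂, b₂) ↔ a₁ < a₂ ∨ (a₁ = a₂ ∧ b₁ < b₂) :=
  Prod.Lex.lt_iff

end LexHelpers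

section Ioo

noncomputable def iooOrderIso {a b : ℝ} (hab : a < b) : Set.Ioo a b ≃o Set.Ioo (-1 : ℝ) 1 where
  toFun x := ⟨(2 * x - a - b) / (b - a), by
    obtain ⟨hx1, hx2⟩ := x.2
    constructor
    · rw [lt_div_iff₀ (by linarith)]; linarith
    · rw [div_lt_one (by linarith)]; linarith⟩
  invFun y := ⟨(a + b) / 2 + y * (b - a) / 2, by
    obtain ⟨hy1, hy2⟩ := y.2
    constructor
    · nlinarith
    · nlinarith⟩
  left_inv x := by
    have hba : b - a ≠ 0 := sub_ne_zero.mpr hab.ne'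
    apply Subtype.ext
    show (a + b) / 2 + ((2 * x - a - b) / (b - a)) * (b - a) / 2 = (x : ℝ)
    field_simp
    ring
  right_inv y := by
    have hba : b - a ≠ 0 := sub_ne_zero.mpr hab.ne'
    apply Subtype.ext
    show (2 * ((a + b) / 2 + y * (b - a) / 2) - a - b) / (b - a) = (y : ℝ)
    field_simp
    ring
  map_rel_iff' := by
    intro x y
    simp only [Equiv.coe_fn_mk, Subtype.mk_le_mk]
    rw [div_le_div_iff_of_pos_right (by linarith : (0:ℝ) < b - a)]
    constructor <;> intro h
    · have : (x : ℝ) ≤ y := by linarith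
      exact this
    · have : (x : ℝ) ≤ y := h
      linarith

noncomputable def realOrderIsoIoo {a b : ℝ} (hab : a < b) : ℝ ≃o Set.Ioo a b :=
  (orderIsoIooNegOneOne ℝ).trans (iooOrderIso hab).symm

end Ioo

section LemmaB

variable {G : Type*} {X : Type*} [AddCommGroup G] [LinearOrder G] [IsOrderedAddMonoid G] [LinearOrder X]

lemma withTop_exists_lt [Nonempty X] (hmin : ∀ x : X, ∃ y, y < x) :
    ∀ x : WithTop X, ∃ y, y < x := by
  intro x
  cases x with
  | top => exact ⟨((Classical.arbitrary X : X) : WithTop X), WithTop.coe_lt_top _⟩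
  | coe a =>
    obtain ⟨y, hy⟩ := hmin a
    exact ⟨(y : WithTop X), WithTop.coe_lt_coe.mpr hy⟩

lemma lemB [Nonempty X] (hmin : ∀ x : X, ∃ y, y < x) (e : (G ×ₗ WithTop X) ≃o ℝ) :
    (∃ f : G ≃+ ℤ, ∀ x y : G, x ≤ y ↔ f x ≤ f y) ∧ Nonempty (X ≃o ℝ) := by
  have hlub : ∀ S : Set (G ×ₗ WithTop X), S.Nonempty → BddAbove S → ∃ s, IsLUB S s :=
    fun S h1 h2 => exists_isLUB_of_orderIsoReal e h1 h2
  obtain ⟨u, hu⟩ : ∃ u : G, 0 < u := by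
    have h1 : e (toLex ((0 : G), (⊤ : WithTop X))) < e (toLex ((0 : G), (⊤ : WithTop X))) + 1 :=
      lt_add_one _
    have h2 := e.symm.lt_iff_lt.mpr h1
    rw [e.symm_apply_apply] at h2
    rcases lex_lt_iff'.mp h2 with h | ⟨-, h⟩
    · exact ⟨(ofLex (e.symm (e (toLex ((0 : G), (⊤ : WithTop X))) + 1))).1, h⟩
    · exact absurd h not_top_lt
  have hnd : ¬ DenselyOrdered G := by
    intro hd
    obtain ⟨s, hs⟩ := hlub {p | (ofLex p).1 < 0}
      ⟨toLex (-u, ⊤), show -u < 0 from neg_lt_zero.mpr hu⟩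
      ⟨toLex (0, ⊤), by
        rintro p hp
        exact le_of_lt (lex_lt_iff'.mpr (Or.inl hp))⟩
    have hk0 : ¬ (ofLex s).1 < 0 := by
      intro hlt
      obtain ⟨k', h1, h2⟩ := exists_between hlt
      have hmem : (toLex (k', (⊤ : WithTop X))) ∈ {p : G ×ₗ WithTop X | (ofLex p).1 < 0} := h2
      rcases lex_le_iff'.mp (show toLex (k', (⊤ : WithTop X))
        ≤ toLex ((ofLex s).1, (ofLex s).2) from hs.1 hmem) with h | ⟨h, h'⟩
      · exact absurd (h1.trans h) (lt_irrefl _)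
      · rw [h] at h1; exact absurd h1 (lt_irrefl _)
    have hk0' : ¬ 0 < (ofLex s).1 := by
      intro hlt
      obtain ⟨k'', h1, h2⟩ := exists_between hlt
      have hub : (toLex (k'', (⊤ : WithTop X)))
          ∈ upperBounds {p : G ×ₗ WithTop X | (ofLex p).1 < 0} := by
        rintro p hp
        exact le_of_lt (lex_lt_iff'.mpr (Or.inl (hp.trans h1)))
      rcases lex_le_iff'.mp (show toLex ((ofLex s).1, (ofLex s).2)
        ≤ toLex (k'', (⊤ : WithTop X)) from hs.2 hub) with h | ⟨h, h'⟩
      · exact absurd (h2.trans h) (lt_irrefl _)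
      · rw [h] at h2; exact absurd h2 (lt_irrefl _)
    have hk : (ofLex s).1 = 0 := le_antisymm (not_lt.mp hk0') (not_lt.mp hk0)
    obtain ⟨y', hy'⟩ := withTop_exists_lt hmin (ofLex s).2
    have hub : (toLex ((0 : G), y')) ∈ upperBounds {p : G ×ₗ WithTop X | (ofLex p).1 < 0} := by
      rintro p hp
      exact le_of_lt (lex_lt_iff'.mpr (Or.inl hp))
    rcases lex_le_iff'.mp (show toLex ((ofLex s).1, (ofLex s).2)
      ≤ toLex ((0 : G), y') from hs.2 hub) with h | ⟨h, h'⟩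
    · rw [hk] at h; exact absurd h (lt_irrefl _)
    · exact absurd hy' (not_lt.mpr h')
  obtain ⟨a, b, hab, hno⟩ : ∃ a b : G, a < b ∧ ∀ c, ¬ (a < c ∧ c < b) := by
    by_contra hcon
    push_neg at hcon
    exact hnd ⟨fun a b h => hcon a b h⟩
  have hu₀pos : 0 < b - a := sub_pos.mpr hab
  have hleast : IsLeast {y : G | 0 < y} (b - a) := by
    refine ⟨hu₀pos, fun c hc => ?_⟩
    by_contra hcu
    push_neg at hcu
    exact hno (a + c) ⟨lt_add_of_pos_right a hc, lt_sub_iff_add_lt'.mp hcu⟩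
  set u₀ : G := b - a with hu₀
  haveI : Archimedean G := by
    constructor
    intro x y hy
    have key : ∃ n : ℕ, x ≤ n • u₀ := by
      by_contra hcon
      push_neg at hcon
      obtain ⟨s, hs⟩ := hlub (Set.range fun n : ℕ => toLex ((n • u₀ : G), (⊤ : WithTop X)))
        ⟨_, ⟨0, rfl⟩⟩
        ⟨toLex (x, ⊤), by
          rintro _ ⟨n, rfl⟩
          exact le_of_lt (lex_lt_iff'.mpr (Or.inl (hcon n)))⟩
      have hklt : ∀ n : ℕ, n • u₀ < (ofLex s).1 := by
        intro n
        have h1 := hs.1 ⟨n + 1, rfl⟩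
        have hstep : n • u₀ < (n + 1) • u₀ := by
          rw [succ_nsmul]
          exact lt_add_of_pos_right _ hu₀pos
        rcases lex_le_iff'.mp (show toLex ((n + 1) • u₀, (⊤ : WithTop X))
          ≤ toLex ((ofLex s).1, (ofLex s).2) from h1) with h | ⟨heq, hle⟩
        · exact hstep.trans h
        · exfalso
          have h2 := hs.1 ⟨n + 2, rfl⟩
          have hstep2 : (n + 1) • u₀ < (n + 2) • u₀ := by
            rw [succ_nsmul u₀ (n + 1)]
            exact lt_add_of_pos_right _ hu₀pos
          rcases lex_le_iff'.mp (show toLex ((n + 2) • u₀, (⊤ : WithTop X))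
            ≤ toLex ((ofLex s).1, (ofLex s).2) from h2) with h' | ⟨heq', -⟩
          · rw [← heq] at h'
            exact absurd h' (asymm hstep2)
          · rw [← heq] at heq'
            exact absurd heq' hstep2.ne'
      have hub2 : toLex ((ofLex s).1 - u₀, (ofLex s).2) ∈
          upperBounds (Set.range fun n : ℕ => toLex ((n • u₀ : G), (⊤ : WithTop X))) := by
        rintro _ ⟨n, rfl⟩
        refine le_of_lt (lex_lt_iff'.mpr (Or.inl ?_))
        have h3 := hklt (n + 1)
        rw [succ_nsmul] at h3
        exact lt_sub_iff_add_lt.mpr h3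
      have hle2 := hs.2 hub2
      have hlt2 : toLex ((ofLex s).1 - u₀, (ofLex s).2) < toLex ((ofLex s).1, (ofLex s).2) :=
        lex_lt_iff'.mpr (Or.inl (sub_lt_self _ hu₀pos))
      exact absurd (hle2.trans_lt hlt2) (lt_irrefl s)
    obtain ⟨n, hn⟩ := key
    exact ⟨n, hn.trans (my_nsmul_le_nsmul (hleast.2 hy) n)⟩
  have hZ : ∃ f : G ≃+ ℤ, ∀ x y : G, x ≤ y ↔ f x ≤ f y := by
    let eZ := LinearOrderedAddCommGroup.int_orderAddMonoidIso_of_isLeast_pos hleast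
    exact ⟨eZ.toAddEquiv, fun x y => (map_le_map_iff eZ).symm⟩
  refine ⟨hZ, ?_⟩
  set a0 := e (toLex ((0 : G), (⊤ : WithTop X))) with ha0
  set b0 := e (toLex (u₀, (⊤ : WithTop X))) with hb0
  have hab0 : a0 < b0 := e.lt_iff_lt.mpr (lex_lt_iff'.mpr (Or.inl hu₀pos))
  set F : X → ℝ := fun x => e (toLex (u₀, (x : WithTop X))) with hFdef
  have hFmono : StrictMono F := fun x y h =>
    e.lt_iff_lt.mpr (lex_lt_iff'.mpr (Or.inr ⟨rfl, WithTop.coe_lt_coe.mpr h⟩))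
  have hrange : Set.range F = Set.Ioo a0 b0 := by
    ext r
    constructor
    · rintro ⟨x, rfl⟩
      exact ⟨e.lt_iff_lt.mpr (lex_lt_iff'.mpr (Or.inl hu₀pos)),
        e.lt_iff_lt.mpr (lex_lt_iff'.mpr (Or.inr ⟨rfl, WithTop.coe_lt_top x⟩))⟩
    · rintro ⟨h1, h2⟩
      have hp1 : toLex ((0 : G), (⊤ : WithTop X)) < e.symm r := by
        have h3 := e.symm.lt_iff_lt.mpr h1
        rwa [e.symm_apply_apply] at h3
      have hp2 : e.symm r < toLex (u₀, (⊤ : WithTop X)) := by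
        have h3 := e.symm.lt_iff_lt.mpr h2
        rwa [e.symm_apply_apply] at h3
      have hp1' : toLex ((0 : G), (⊤ : WithTop X))
          < toLex ((ofLex (e.symm r)).1, (ofLex (e.symm r)).2) := hp1
      have hp2' : toLex ((ofLex (e.symm r)).1, (ofLex (e.symm r)).2)
          < toLex (u₀, (⊤ : WithTop X)) := hp2
      have hg : 0 < (ofLex (e.symm r)).1 := by
        rcases lex_lt_iff'.mp hp1' with h | ⟨-, h⟩
        · exact h
        · exact absurd h not_top_lt
      rcases lex_lt_iff'.mp hp2' with hg' | ⟨hgu, hylt⟩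
      · exact absurd (hleast.2 hg) (not_le.mpr hg')
      · obtain ⟨x, hx⟩ : ∃ x : X, (ofLex (e.symm r)).2 = (x : WithTop X) := by
          cases hy : (ofLex (e.symm r)).2 with
          | top => rw [hy] at hylt; exact absurd hylt (lt_irrefl _)
          | coe x => exact ⟨x, rfl⟩
        refine ⟨x, ?_⟩
        have heq : toLex (u₀, (x : WithTop X)) = e.symm r := by
          have h5 : e.symm r = toLex ((ofLex (e.symm r)).1, (ofLex (e.symm r)).2) := rfl
          rw [h5, hgu, hx]
        show e (toLex (u₀, (x : WithTop X))) = r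
        rw [heq, e.apply_symm_apply]
  let e1 : X ≃o Set.range F := StrictMono.orderIso F hFmono
  let e2 : X ≃o Set.Ioo a0 b0 := e1.trans (OrderIso.setCongr _ _ hrange)
  exact ⟨e2.trans (realOrderIsoIoo hab0).symm⟩

end LemmaB

universe u



/-- `iterLex G j = G j ×ₗ WithTop (G (j-1) ×ₗ WithTop (⋯ ×ₗ WithTop (G 0)))`. -/
def iterLex (G : ℕ → Type*) : ℕ → Type _
  | 0 => G 0
  | j + 1 => G (j + 1) ×ₗ WithTop (iterLex G j)

instance iterLexLinearOrder (G : ℕ → Type*) [∀ i, LinearOrder (G i)] :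
    ∀ j, LinearOrder (iterLex G j)
  | 0 => inferInstanceAs (LinearOrder (G 0))
  | j + 1 =>
      letI := iterLexLinearOrder G j
      @Prod.Lex.instLinearOrder (G (j + 1)) (WithTop (iterLex G j)) _
        (@WithTop.linearOrder (iterLex G j) (iterLexLinearOrder G j))

instance iterLexNonempty (G : ℕ → Type*) [∀ i, AddCommGroup (G i)] [∀ i, LinearOrder (G i)] [∀ i, IsOrderedAddMonoid (G i)] :
    ∀ j, Nonempty (iterLex G j)
  | 0 => ⟨(0 : G 0)⟩
  | j + 1 =>
      letI := iterLexNonempty G j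
      ⟨toLex ((0 : G (j + 1)), (⊤ : WithTop (iterLex G j)))⟩

/-- Structural dichotomy: each iterated lex product either has no minimal elements,
or its `WithTop` has a jump (a covering pair). -/
lemma lemC (G : ℕ → Type u) [∀ i, AddCommGroup (G i)] [∀ i, LinearOrder (G i)] [∀ i, IsOrderedAddMonoid (G i)] :
    ∀ k : ℕ, (∀ x : iterLex G k, ∃ y, y < x) ∨
      (∃ a b : WithTop (iterLex G k), a < b ∧ ∀ c, ¬ (a < c ∧ c < b)) := by
  intro k
  induction k with
  | zero =>
    rcases subsingleton_or_nontrivial (G 0) with hsub | hnt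
    · right
      refine ⟨((0 : G 0) : WithTop (G 0)), ⊤, WithTop.coe_lt_top _, ?_⟩
      rintro c ⟨h1, h2⟩
      obtain ⟨x, rfl⟩ : ∃ x : G 0, c = (x : WithTop (G 0)) := by
        cases hc : c with
        | top => rw [hc] at h2; exact absurd h2 (lt_irrefl _)
        | coe x => exact ⟨x, rfl⟩
      have : (0 : G 0) < x := WithTop.coe_lt_coe.mp h1
      exact absurd (Subsingleton.elim (0 : G 0) x) this.ne
    · left
      intro x
      obtain ⟨v, hv⟩ := exists_ne (0 : G 0)
      have h0 : (0 : G 0) < |v| := abs_pos.mpr hv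
      exact ⟨(show G 0 from x) - |v|,
        show (show G 0 from x) - |v| < (show G 0 from x) from sub_lt_self _ h0⟩
  | succ k ih =>
    rcases ih with hmin | ⟨a, b, hab, hno⟩
    · left
      intro x
      obtain ⟨y', hy'⟩ : ∃ y', y' < (ofLex x).2 := by
        cases hy : (ofLex x).2 with
        | top =>
          exact ⟨((Classical.arbitrary (iterLex G k) : iterLex G k) : WithTop (iterLex G k)),
            WithTop.coe_lt_top _⟩
        | coe z =>
          obtain ⟨z', hz'⟩ := hmin z
          exact ⟨(z' : WithTop (iterLex G k)), WithTop.coe_lt_coe.mpr hz'⟩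
      refine ⟨toLex ((ofLex x).1, y'), ?_⟩
      exact lex_lt_iff'.mpr (Or.inr ⟨rfl, hy'⟩)
    · right
      refine ⟨WithTop.some (show iterLex G (k + 1) from toLex ((0 : G (k + 1)), a)),
        WithTop.some (show iterLex G (k + 1) from toLex ((0 : G (k + 1)), b)),
        ?_, ?_⟩
      · exact WithTop.coe_lt_coe.mpr (lex_lt_iff'.mpr (Or.inr ⟨rfl, hab⟩))
      · rintro c ⟨h1, h2⟩
        obtain ⟨d, rfl⟩ : ∃ d : iterLex G (k + 1), c = (d : WithTop (iterLex G (k + 1))) := by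
          cases hc : c with
          | top => rw [hc] at h2; exact absurd h2 (not_top_lt)
          | coe d => exact ⟨d, rfl⟩
        have h1' : toLex ((0 : G (k + 1)), a) < toLex ((ofLex d).1, (ofLex d).2) :=
          WithTop.coe_lt_coe.mp h1
        have h2' : toLex ((ofLex d).1, (ofLex d).2) < toLex ((0 : G (k + 1)), b) :=
          WithTop.coe_lt_coe.mp h2
        rcases lex_lt_iff'.mp h1' with hg1 | ⟨hg1, hlt1⟩ <;>
          rcases lex_lt_iff'.mp h2' with hg2 | ⟨hg2, hlt2⟩
        · exact absurd (hg1.trans hg2) (lt_irrefl _)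
        · rw [← hg2] at hg1; exact absurd hg1 (lt_irrefl _)
        · rw [← hg1] at hg2; exact absurd hg2 (lt_irrefl _)
        · exact hno (ofLex d).2 ⟨hlt1, hlt2⟩

lemma keyLemma (G : ℕ → Type u) [∀ i, AddCommGroup (G i)] [∀ i, LinearOrder (G i)] [∀ i, IsOrderedAddMonoid (G i)] :
    ∀ k : ℕ, (iterLex G k ≃o ℝ) →
      ((∃ f : G 0 ≃+ ℝ, ∀ x y : G 0, x ≤ y ↔ f x ≤ f y) ∧
        ∀ j, 1 ≤ j → j ≤ k → ∃ f : G j ≃+ ℤ, ∀ x y : G j, x ≤ y ↔ f x ≤ f y) := by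
  intro k
  induction k with
  | zero =>
    intro e
    exact ⟨ordered_group_iso_real_of_orderIso e, fun j h1 h2 => absurd (h1.trans h2) (by omega)⟩
  | succ k ih =>
    intro e
    have e' : (G (k + 1) ×ₗ WithTop (iterLex G k)) ≃o ℝ := e
    rcases lemC G k with hmin | ⟨a, b, hab, hno⟩
    · obtain ⟨hZ, ⟨eX⟩⟩ := lemB hmin e'
      obtain ⟨h0, hj⟩ := ih eX
      refine ⟨h0, fun j h1 h2 => ?_⟩
      rcases Nat.lt_or_ge j (k + 1) with h | h
      · exact hj j h1 (by omega)
      · have hj1 : j = k + 1 := by omega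
        subst hj1
        exact hZ
    · exfalso
      have h1 : (toLex ((0 : G (k + 1)), a) : G (k + 1) ×ₗ WithTop (iterLex G k))
          < toLex ((0 : G (k + 1)), b) := lex_lt_iff'.mpr (Or.inr ⟨rfl, hab⟩)
      obtain ⟨r, hr1, hr2⟩ := exists_between (e'.lt_iff_lt.mpr h1)
      have hc1 : toLex ((0 : G (k + 1)), a) < e'.symm r := by
        have h3 := e'.symm.lt_iff_lt.mpr hr1
        rwa [e'.symm_apply_apply] at h3
      have hc2 : e'.symm r < toLex ((0 : G (k + 1)), b) := by
        have h3 := e'.symm.lt_iff_lt.mpr hr2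
        rwa [e'.symm_apply_apply] at h3
      have hc1' : toLex ((0 : G (k + 1)), a)
          < toLex ((ofLex (e'.symm r)).1, (ofLex (e'.symm r)).2) := hc1
      have hc2' : toLex ((ofLex (e'.symm r)).1, (ofLex (e'.symm r)).2)
          < toLex ((0 : G (k + 1)), b) := hc2
      rcases lex_lt_iff'.mp hc1' with hg1 | ⟨hg1, hlt1⟩ <;>
        rcases lex_lt_iff'.mp hc2' with hg2 | ⟨hg2, hlt2⟩
      · exact absurd (hg1.trans hg2) (lt_irrefl _)
      · rw [← hg2] at hg1; exact absurd hg1 (lt_irrefl _)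
      · rw [← hg1] at hg2; exact absurd hg2 (lt_irrefl _)
      · exact hno (ofLex (e'.symm r)).2 ⟨hlt1, hlt2⟩

/-- let `n ≥ 1` and `G 1, …, G n` be linearly ordered abelian groups, and
let `L i = G i ×ₗ WithTop (L (i+1))` with `L n = G n`; so
`L 1 = iterLex (fun j => G (n - j)) (n - 1)`.  If `L 1` is order-isomorphic to `ℝ` then
`G i` is isomorphic as an ordered group to `ℤ` for `1 ≤ i ≤ n - 1`, and `G n` is
isomorphic as an ordered group to `ℝ`. -/
theorem stmt_13 (n : ℕ) (hn : 1 ≤ n) (G : ℕ → Type*)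
    [∀ i, AddCommGroup (G i)] [∀ i, LinearOrder (G i)] [∀ i, IsOrderedAddMonoid (G i)]
    (h : Nonempty (iterLex (fun j => G (n - j)) (n - 1) ≃o ℝ)) :
    (∀ i, 1 ≤ i → i ≤ n - 1 → ∃ f : G i ≃+ ℤ, ∀ x y : G i, x ≤ y ↔ f x ≤ f y) ∧
    (∃ f : G n ≃+ ℝ, ∀ x y : G n, x ≤ y ↔ f x ≤ f y) := by
  obtain ⟨e⟩ := h
  obtain ⟨h0, hj⟩ := keyLemma (fun j => G (n - j)) (n - 1) e
  constructor
  · intro i h1 h2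
    have h3 := hj (n - i) (by omega) (by omega)
    have h4 : n - (n - i) = i := by omega
    rw [h4] at h3
    exact h3
  · exact h0
end

section
/- On the lexicographic product ℤ ×ₗ WithTop ℝ define the operation (m, x) ∗ (n, y) = (m + n, x + y), where addition on WithTop ℝ is extended so that ⊤ + y = y + ⊤ = ⊤. Then ∗ is a commutative monoid operation with unit (0, 0) that is residuated (for all u, w the set {v : u ∗ v ≤ w} has a greatest element, denoted u→w), and, writing ¬u := u→(0,0), the identity ¬¬u = u holds for all u; explicitly, ¬(m, x) = (−m, −x) for x ∈ ℝ and ¬(m, ⊤) = (−m−1, ⊤). Hence ℤ ×ₗ WithTop ℝ with ∗ is an odd involutive residuated chain. -/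
/-- The coordinatewise monoidal operation on `ℤ ×ₗ WithTop ℝ`:
`(m,x) ∗ (n,y) = (m+n, x+y)`, where on `WithTop ℝ` addition satisfies
`⊤ + y = y + ⊤ = ⊤`. -/
noncomputable def u1star (u v : ℤ ×ₗ WithTop ℝ) : ℤ ×ₗ WithTop ℝ :=
  toLex ((ofLex u).1 + (ofLex v).1, (ofLex u).2 + (ofLex v).2)

/-- The residual operation: `res u w` is the greatest `v` with `u ∗ v ≤ w`. -/
noncomputable def u1res (u w : ℤ ×ₗ WithTop ℝ) : ℤ ×ₗ WithTop ℝ :=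
  match (ofLex u).2, (ofLex w).2 with
  | ⊤, ⊤ => toLex ((ofLex w).1 - (ofLex u).1, (⊤ : WithTop ℝ))
  | ⊤, (_ : ℝ) => toLex ((ofLex w).1 - (ofLex u).1 - 1, (⊤ : WithTop ℝ))
  | (_ : ℝ), ⊤ => toLex ((ofLex w).1 - (ofLex u).1, (⊤ : WithTop ℝ))
  | (x : ℝ), (z : ℝ) => toLex ((ofLex w).1 - (ofLex u).1, ((z - x : ℝ) : WithTop ℝ))

lemma u1adj' (m n k : ℤ) (x z y : WithTop ℝ) :
    u1star (toLex (m, x)) (toLex (k, y)) ≤ toLex (n, z) ↔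
      toLex (k, y) ≤ u1res (toLex (m, x)) (toLex (n, z)) := by
  induction x using WithTop.recTopCoe <;> induction y using WithTop.recTopCoe <;>
    induction z using WithTop.recTopCoe <;>
    simp [u1star, u1res, Prod.Lex.le_iff, ← WithTop.coe_add, ← WithTop.coe_sub,
      WithTop.coe_le_coe] <;>
    first
      | omega
      | (constructor <;> rintro (h | ⟨h1, h2⟩) <;>
          first
            | exact Or.inl (by omega)
            | exact Or.inr ⟨by omega, by norm_cast; linarith⟩
            | exact Or.inr ⟨by omega, by norm_cast at h2; linarith⟩)

lemma u1adj (u w v : ℤ ×ₗ WithTop ℝ) : u1star u v ≤ w ↔ v ≤ u1res u w := by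
  simpa using u1adj' (ofLex u).1 (ofLex w).1 (ofLex v).1 (ofLex u).2 (ofLex w).2 (ofLex v).2

lemma u1neg_coe (m : ℤ) (x : ℝ) :
    u1res (toLex (m, (x : WithTop ℝ))) (toLex (0, (0 : WithTop ℝ))) =
      toLex (-m, ((-x : ℝ) : WithTop ℝ)) := by
  have h : u1res (toLex (m, (x : WithTop ℝ))) (toLex (0, (0 : WithTop ℝ))) =
      toLex (0 - m, ((0 - x : ℝ) : WithTop ℝ)) := rfl
  rw [h]; norm_num

lemma u1neg_top (m : ℤ) :
    u1res (toLex (m, (⊤ : WithTop ℝ))) (toLex (0, (0 : WithTop ℝ))) =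
      toLex (-m - 1, (⊤ : WithTop ℝ)) := by
  have h : u1res (toLex (m, (⊤ : WithTop ℝ))) (toLex (0, (0 : WithTop ℝ))) =
      toLex (0 - m - 1, (⊤ : WithTop ℝ)) := rfl
  rw [h]; norm_num

lemma u1inv' (m : ℤ) (x : WithTop ℝ) :
    u1res (u1res (toLex (m, x)) (toLex (0, (0 : WithTop ℝ)))) (toLex (0, (0 : WithTop ℝ))) =
      toLex (m, x) := by
  induction x using WithTop.recTopCoe
  · rw [u1neg_top, u1neg_top]; norm_num
  · rw [u1neg_coe, u1neg_coe]; simp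

/-- `ℤ ×ₗ WithTop ℝ` with the coordinatewise operation `∗` is an odd
involutive residuated chain with unit `(0,0)`: `∗` is commutative, associative, has unit
`(0,0)`, is residuated (`res u w` is the greatest `v` with `u ∗ v ≤ w`), the residual
complement `¬u := res u (0,0)` is an involution, and explicitly `¬(m,x) = (−m,−x)` for
`x ∈ ℝ` and `¬(m,⊤) = (−m−1,⊤)`. -/
theorem stmt_15 :
    (∀ u v : ℤ ×ₗ WithTop ℝ, u1star u v = u1star v u) ∧
    (∀ u v w : ℤ ×ₗ WithTop ℝ, u1star (u1star u v) w = u1star u (u1star v w)) ∧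
    (∀ u : ℤ ×ₗ WithTop ℝ, u1star u (toLex (0, (0 : WithTop ℝ))) = u) ∧
    ∃ res : (ℤ ×ₗ WithTop ℝ) → (ℤ ×ₗ WithTop ℝ) → (ℤ ×ₗ WithTop ℝ),
      (∀ u w v, u1star u v ≤ w ↔ v ≤ res u w) ∧
      (∀ u, res (res u (toLex (0, (0 : WithTop ℝ)))) (toLex (0, (0 : WithTop ℝ))) = u) ∧
      (∀ (m : ℤ) (x : ℝ),
        res (toLex (m, (x : WithTop ℝ))) (toLex (0, (0 : WithTop ℝ))) =
          toLex (-m, ((-x : ℝ) : WithTop ℝ))) ∧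
      (∀ m : ℤ,
        res (toLex (m, (⊤ : WithTop ℝ))) (toLex (0, (0 : WithTop ℝ))) =
          toLex (-m - 1, (⊤ : WithTop ℝ))) := by
  refine ⟨fun u v => ?_, fun u v w => ?_, fun u => ?_, u1res, u1adj, fun u => ?_,
    u1neg_coe, u1neg_top⟩
  · simp [u1star, add_comm]
  · simp [u1star, add_assoc]
  · simp [u1star]
  · simpa using u1inv' (ofLex u).1 (ofLex u).2
end
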